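/- The kernel of an order bounded linear functional l on a Riesz space X is a Grothendieck subspace if and only if the modulus |l| is the sum of two Riesz homomorphisms X → ℝ. -/

import Mathlib

variable {X : Type*} [Lattice X] [AddCommGroup X]
  [CovariantClass X X (· + ·) (· ≤ ·)] [Module ℝ X] [PosSMulMono ℝ X]

/-- A Grothendieck subspace: closed under `x ⊔ y ⊔ 0 + x ⊓ y ⊓ 0`. -/
def IsGrothendieckSubspace (H : Submodule ℝ X) : Prop :=
  ∀ x ∈ H, ∀ y ∈ H, x ⊔ y ⊔ 0 + x ⊓ y ⊓ 0 ∈ H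

/-- A Riesz subspace: closed under the lattice operations. -/
def IsRieszSubspace (H : Submodule ℝ X) : Prop :=
  ∀ x ∈ H, ∀ y ∈ H, x ⊔ y ∈ H ∧ x ⊓ y ∈ H

/-- A Riesz homomorphism: a linear map preserving finite suprema. -/
def IsRieszHom (f : X →ₗ[ℝ] ℝ) : Prop :=
  ∀ x y : X, f (x ⊔ y) = f x ⊔ f y

/-- A positive linear functional. -/
def IsPositive (f : X →ₗ[ℝ] ℝ) : Prop :=
  ∀ x : X, 0 ≤ x → 0 ≤ f x

/-- `p` is the positive part of the order bounded functional `l`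
(so `l₋ = p - l` and `|l| = p + (p - l)`). -/
def IsPosPartOf (l p : X →ₗ[ℝ] ℝ) : Prop :=
  IsPositive p ∧ IsPositive (p - l) ∧
    ∀ x : X, 0 ≤ x → p x = sSup {r : ℝ | ∃ y : X, 0 ≤ y ∧ y ≤ x ∧ l y = r}


set_option linter.unusedSectionVars false
set_option maxHeartbeats 1000000



/-- A monotone additive map ℝ → ℝ is linear. -/
lemma monotone_additive_real (G : ℝ →+ ℝ) (hm : Monotone G) (r : ℝ) : G r = r * G 1 := by
  have hq : ∀ q : ℚ, G (q : ℝ) = q * G 1 := by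
    intro q
    have := map_ratCast_smul G ℝ ℝ q (1 : ℝ)
    simpa [Rat.smul_def] using this
  have hG1 : 0 ≤ G 1 := by
    have := hm (le_of_lt one_pos)
    simpa [map_zero] using this
  have key : ∀ ε : ℝ, 0 < ε → r * G 1 - ε * G 1 ≤ G r ∧ G r ≤ r * G 1 + ε * G 1 := by
    intro ε hε
    obtain ⟨s, h1, h2⟩ := exists_rat_btwn (show r - ε < r by linarith)
    obtain ⟨t, h1', h2'⟩ := exists_rat_btwn (show r < r + ε by linarith)
    constructor
    · have hmono := hm h2.le
      rw [hq] at hmono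
      nlinarith
    · have hmono := hm h1'.le
      rw [hq] at hmono
      nlinarith
  by_contra h
  rcases lt_or_gt_of_ne h with hlt | hgt
  · have hε : 0 < (r * G 1 - G r) / (G 1 + 1) := div_pos (by linarith) (by linarith)
    obtain ⟨k1, _⟩ := key _ hε
    have hG1' : G 1 / (G 1 + 1) < 1 := by
      rw [div_lt_one (by linarith)]; linarith
    have : (r * G 1 - G r) / (G 1 + 1) * G 1 < r * G 1 - G r := by
      calc (r * G 1 - G r) / (G 1 + 1) * G 1 = (r * G 1 - G r) * (G 1 / (G 1 + 1)) := by ring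
      _ < (r * G 1 - G r) * 1 := by
          exact mul_lt_mul_of_pos_left hG1' (by linarith)
      _ = r * G 1 - G r := by ring
    linarith
  · have hε : 0 < (G r - r * G 1) / (G 1 + 1) := div_pos (by linarith) (by linarith)
    obtain ⟨_, k2⟩ := key _ hε
    have hG1' : G 1 / (G 1 + 1) < 1 := by
      rw [div_lt_one (by linarith)]; linarith
    have : (G r - r * G 1) / (G 1 + 1) * G 1 < G r - r * G 1 := by
      calc (G r - r * G 1) / (G 1 + 1) * G 1 = (G r - r * G 1) * (G 1 / (G 1 + 1)) := by ring
      _ < (G r - r * G 1) * 1 := mul_lt_mul_of_pos_left hG1' (by linarith)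
      _ = G r - r * G 1 := by ring
    linarith

lemma smul_sup' {r : ℝ} (hr : 0 ≤ r) (x y : X) : r • (x ⊔ y) = (r • x) ⊔ (r • y) := by
  rcases eq_or_lt_of_le hr with h | h
  · simp [← h]
  · refine le_antisymm ?_ (sup_le (smul_le_smul_of_nonneg_left le_sup_left hr)
      (smul_le_smul_of_nonneg_left le_sup_right hr))
    have h1 : x ≤ r⁻¹ • ((r • x) ⊔ (r • y)) := by
      have := smul_le_smul_of_nonneg_left (le_sup_left : r • x ≤ (r • x) ⊔ (r • y))
        (inv_nonneg.mpr hr)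
      rwa [inv_smul_smul₀ h.ne' x] at this
    have h2 : y ≤ r⁻¹ • ((r • x) ⊔ (r • y)) := by
      have := smul_le_smul_of_nonneg_left (le_sup_right : r • y ≤ (r • x) ⊔ (r • y))
        (inv_nonneg.mpr hr)
      rwa [inv_smul_smul₀ h.ne' y] at this
    have := smul_le_smul_of_nonneg_left (sup_le h1 h2) hr
    rwa [smul_inv_smul₀ h.ne'] at this

lemma smul_inf' {r : ℝ} (hr : 0 ≤ r) (x y : X) : r • (x ⊓ y) = (r • x) ⊓ (r • y) := by
  have h := smul_sup' hr (-x) (-y)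
  have h2 : x ⊓ y = -(-x ⊔ -y) := by simp [neg_sup]
  rw [h2, smul_neg, h, neg_sup, smul_neg, smul_neg, neg_neg, neg_neg]

lemma inf_add_le' {a b c : X} (ha : 0 ≤ a) (hb : 0 ≤ b) (hc : 0 ≤ c) :
    a ⊓ (b + c) ≤ a ⊓ b + a ⊓ c := by
  have h1 : a ⊓ (b + c) ≤ a ⊓ b + c := by
    rw [← sub_le_iff_le_add]
    calc a ⊓ (b + c) - c = (a - c) ⊓ (b + c - c) := inf_sub _ _ _
    _ ≤ a ⊓ b := by rw [add_sub_cancel_right]; exact inf_le_inf_right b (sub_le_self a hc)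
  have h2 : a ⊓ (b + c) ≤ a ⊓ b + a :=
    inf_le_left.trans (le_add_of_nonneg_left (le_inf ha hb))
  calc a ⊓ (b + c) ≤ (a ⊓ b + c) ⊓ (a ⊓ b + a) := le_inf h1 h2
  _ = a ⊓ b + c ⊓ a := (add_inf _ _ _).symm
  _ = a ⊓ b + a ⊓ c := by rw [inf_comm c a]

/-- Extension of a cone-additive nonnegative functional to a linear map. -/
lemma cone_extension (F₀ : X → ℝ)
    (hadd : ∀ x y : X, 0 ≤ x → 0 ≤ y → F₀ (x + y) = F₀ x + F₀ y)
    (hpos : ∀ x : X, 0 ≤ x → 0 ≤ F₀ x) :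
    ∃ F : X →ₗ[ℝ] ℝ, ∀ x : X, 0 ≤ x → F x = F₀ x := by
  have h0 : F₀ 0 = 0 := by have := hadd 0 0 le_rfl le_rfl; simpa using this.symm
  have hscal : ∀ (x : X), 0 ≤ x → ∀ α β : ℝ, 0 ≤ α → 0 ≤ β →
      F₀ ((α + β) • x) = F₀ (α • x) + F₀ (β • x) := by
    intro x hx α β hα hβ
    rw [add_smul]
    exact hadd _ _ (smul_nonneg hα hx) (smul_nonneg hβ hx)
  have hhomog : ∀ (x : X), 0 ≤ x → ∀ r : ℝ, 0 ≤ r → F₀ (r • x) = r * F₀ x := by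
    intro x hx r hr
    set G : ℝ →+ ℝ :=
      { toFun := fun t => F₀ (t⁺ • x) - F₀ (t⁻ • x)
        map_zero' := by simp [h0]
        map_add' := by
          intro s t
          have key : (s + t)⁺ + (s⁻ + t⁻) = (s + t)⁻ + (s⁺ + t⁺) := by
            have hs := posPart_sub_negPart s
            have ht := posPart_sub_negPart t
            have hst := posPart_sub_negPart (s + t)
            linarith
          have e1 : F₀ (((s + t)⁺ + (s⁻ + t⁻)) • x)
              = F₀ ((s+t)⁺ • x) + F₀ (s⁻ • x) + F₀ (t⁻ • x) := by
            rw [hscal x hx _ _ (posPart_nonneg _) (by positivity)]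
            rw [hscal x hx _ _ (negPart_nonneg _) (negPart_nonneg _)]
            ring
          have e2 : F₀ (((s + t)⁻ + (s⁺ + t⁺)) • x)
              = F₀ ((s+t)⁻ • x) + F₀ (s⁺ • x) + F₀ (t⁺ • x) := by
            rw [hscal x hx _ _ (negPart_nonneg _) (by positivity)]
            rw [hscal x hx _ _ (posPart_nonneg _) (posPart_nonneg _)]
            ring
          rw [key] at e1
          rw [e2] at e1
          linarith }
    have hmono : Monotone G := by
      intro s t hst
      have h1 : s⁺ ≤ t⁺ := posPart_mono hst
      have h2 : t⁻ ≤ s⁻ := negPart_anti hst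
      have k1 : F₀ (s⁺ • x) ≤ F₀ (t⁺ • x) := by
        have he : F₀ (t⁺ • x) = F₀ (s⁺ • x) + F₀ ((t⁺ - s⁺) • x) := by
          have := hscal x hx s⁺ (t⁺ - s⁺) (posPart_nonneg _) (by linarith)
          simpa using this
        have := hpos ((t⁺ - s⁺) • x) (smul_nonneg (by linarith) hx)
        linarith
      have k2 : F₀ (t⁻ • x) ≤ F₀ (s⁻ • x) := by
        have he : F₀ (s⁻ • x) = F₀ (t⁻ • x) + F₀ ((s⁻ - t⁻) • x) := by
          have := hscal x hx t⁻ (s⁻ - t⁻) (negPart_nonneg _) (by linarith)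
          simpa using this
        have := hpos ((s⁻ - t⁻) • x) (smul_nonneg (by linarith) hx)
        linarith
      show F₀ (s⁺ • x) - F₀ (s⁻ • x) ≤ F₀ (t⁺ • x) - F₀ (t⁻ • x)
      linarith
    have hlin := monotone_additive_real G hmono r
    have hG1 : G 1 = F₀ x := by
      show F₀ ((1:ℝ)⁺ • x) - F₀ ((1:ℝ)⁻ • x) = F₀ x
      norm_num [posPart_of_nonneg, negPart_of_nonneg, h0]
    have hGr : G r = F₀ (r • x) := by
      show F₀ (r⁺ • x) - F₀ (r⁻ • x) = F₀ (r • x)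
      rw [posPart_of_nonneg hr, negPart_of_nonneg hr]
      simp [h0]
    rw [hG1, hGr] at hlin
    exact hlin
  have hFadd : ∀ x y : X, F₀ (x + y)⁺ - F₀ (x + y)⁻ = (F₀ x⁺ - F₀ x⁻) + (F₀ y⁺ - F₀ y⁻) := by
    intro x y
    have key : (x + y)⁺ + (x⁻ + y⁻) = (x + y)⁻ + (x⁺ + y⁺) := by
      have h := posPart_sub_negPart (x + y)
      have hx' := posPart_sub_negPart x
      have hy' := posPart_sub_negPart y
      have hd : ((x+y)⁺ + (x⁻ + y⁻)) - ((x+y)⁻ + (x⁺ + y⁺))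
          = ((x+y)⁺ - (x+y)⁻) - ((x⁺ - x⁻) + (y⁺ - y⁻)) := by abel
      rw [h, hx', hy'] at hd
      have hd2 : ((x+y)⁺ + (x⁻ + y⁻)) - ((x+y)⁻ + (x⁺ + y⁺)) = 0 := by rw [hd]; abel
      exact sub_eq_zero.mp hd2
    have e1 : F₀ ((x + y)⁺ + (x⁻ + y⁻)) = F₀ (x+y)⁺ + F₀ x⁻ + F₀ y⁻ := by
      rw [hadd _ _ (posPart_nonneg _) (add_nonneg (negPart_nonneg _) (negPart_nonneg _)),
        hadd _ _ (negPart_nonneg _) (negPart_nonneg _)]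
      ring
    have e2 : F₀ ((x + y)⁻ + (x⁺ + y⁺)) = F₀ (x+y)⁻ + F₀ x⁺ + F₀ y⁺ := by
      rw [hadd _ _ (negPart_nonneg _) (add_nonneg (posPart_nonneg _) (posPart_nonneg _)),
        hadd _ _ (posPart_nonneg _) (posPart_nonneg _)]
      ring
    rw [key, e2] at e1
    linarith
  refine ⟨{ toFun := fun x => F₀ x⁺ - F₀ x⁻
            map_add' := hFadd
            map_smul' := ?_ }, ?_⟩
  · intro r x
    dsimp only [RingHom.id_apply]
    rw [smul_eq_mul]
    rcases le_or_gt 0 r with hr | hr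
    · have hp : (r • x)⁺ = r • x⁺ := by
        rw [posPart_def, posPart_def, smul_sup' hr x 0, smul_zero]
      have hn : (r • x)⁻ = r • x⁻ := by
        rw [negPart_def, negPart_def, ← smul_neg, smul_sup' hr (-x) 0, smul_zero]
      rw [hp, hn, hhomog _ (posPart_nonneg x) r hr, hhomog _ (negPart_nonneg x) r hr]
      ring
    · have hr' : 0 ≤ -r := by linarith
      have hp : (r • x)⁺ = (-r) • x⁻ := by
        rw [show r • x = -((-r) • x) by simp, posPart_neg, negPart_def, negPart_def,
          ← smul_neg, smul_sup' hr' (-x) 0, smul_zero]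
      have hn : (r • x)⁻ = (-r) • x⁺ := by
        rw [show r • x = -((-r) • x) by simp, negPart_neg, posPart_def, posPart_def,
          smul_sup' hr' x 0, smul_zero]
      rw [hp, hn, hhomog _ (negPart_nonneg x) _ hr', hhomog _ (posPart_nonneg x) _ hr']
      ring
  · intro x hx
    show F₀ x⁺ - F₀ x⁻ = F₀ x
    rw [posPart_of_nonneg hx, negPart_of_nonneg hx, h0]
    ring
section Cores
variable {l m : X →ₗ[ℝ] ℝ}

lemma mono_of_pos {m : X →ₗ[ℝ] ℝ} (hmpos : ∀ z : X, 0 ≤ z → 0 ≤ m z) :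
    ∀ {x y : X}, x ≤ y → m x ≤ m y := by
  intro x y hxy
  have := hmpos (y - x) (sub_nonneg.mpr hxy)
  rw [map_sub] at this
  linarith

lemma core1 (hker : ∀ s t : X, l s = 0 → l t = 0 → l (s ⊔ t ⊔ 0 + s ⊓ t ⊓ 0) = 0)
    (hm : ∀ z : X, 0 ≤ z → |l z| ≤ m z) (hmpos : ∀ z : X, 0 ≤ z → 0 ≤ m z)
    (a b c : X) (ha : 0 ≤ a) (hb : 0 ≤ b) (hc : 0 ≤ c)
    (hla : l a = 1) (hlb : l b = 1) (hlc : l c = 1)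
    (hab : m (a ⊓ b) < 1/4) (hac : m (a ⊓ c) < 1/4) (hbc : m (b ⊓ c) < 1/4) : False := by
  set s := a - b with hs
  set t := a - c with ht
  have hls : l s = 0 := by rw [hs, map_sub, hla, hlb]; ring
  have hlt : l t = 0 := by rw [ht, map_sub, hla, hlc]; ring
  have hst : s ⊔ t = a - b ⊓ c := by
    rw [hs, ht, sub_eq_add_neg, sub_eq_add_neg, ← add_sup, ← neg_inf, ← sub_eq_add_neg]
  have hst2 : s ⊓ t = a - b ⊔ c := by
    rw [hs, ht, sub_eq_add_neg, sub_eq_add_neg, ← add_inf, ← neg_sup, ← sub_eq_add_neg]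
  have e1 : s ⊔ t ⊔ 0 = a ⊔ (b ⊓ c) - b ⊓ c := by
    rw [hst, sup_sub]; simp
  have e2 : s ⊓ t ⊓ 0 = a ⊓ (b ⊔ c) - b ⊔ c := by
    rw [hst2, inf_sub]; simp
  have hw := hker s t hls hlt
  rw [e1, e2, map_add, map_sub, map_sub] at hw
  have hsum : l (b ⊓ c) + l (b ⊔ c) = 2 := by
    have := congrArg l (inf_add_sup b c)
    rw [map_add, map_add, hlb, hlc] at this
    linarith
  have bound1 : l (a ⊔ (b ⊓ c)) ≤ 1 + m (b ⊓ c) := by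
    have hδ1 : 0 ≤ a ⊔ (b ⊓ c) - a := sub_nonneg.mpr le_sup_left
    have hδ2 : a ⊔ (b ⊓ c) - a ≤ b ⊓ c := by
      have h' : a ⊔ (b ⊓ c) ≤ a + b ⊓ c :=
        sup_le (le_add_of_nonneg_right (le_inf hb hc)) (le_add_of_nonneg_left ha)
      rw [add_comm] at h'
      exact sub_le_iff_le_add.mpr h'
    have h1 := hm _ hδ1
    have h2 := mono_of_pos hmpos hδ2
    rw [map_sub, hla] at h1
    have := abs_le.mp h1
    linarith
  have bound2 : l (a ⊓ (b ⊔ c)) ≤ m (a ⊓ b) + m (a ⊓ c) := by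
    have hz1 : (0:X) ≤ a ⊓ (b ⊔ c) := le_inf ha (le_trans hb le_sup_left)
    have hz2 : a ⊓ (b ⊔ c) ≤ a ⊓ b + a ⊓ c := by
      have h3 : a ⊓ (b ⊔ c) ≤ a ⊓ (b + c) :=
        inf_le_inf_left a (sup_le (le_add_of_nonneg_right hc) (le_add_of_nonneg_left hb))
      exact h3.trans (inf_add_le' ha hb hc)
    have h1 := hm _ hz1
    have h2 := mono_of_pos hmpos hz2
    rw [map_add] at h2
    have := abs_le.mp h1
    linarith
  linarith
end Cores
section Cores2
variable {l m : X →ₗ[ℝ] ℝ}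

lemma core2 (hker : ∀ s t : X, l s = 0 → l t = 0 → l (s ⊔ t ⊔ 0 + s ⊓ t ⊓ 0) = 0)
    (hm : ∀ z : X, 0 ≤ z → |l z| ≤ m z)
    (a b c : X) (ha : 0 ≤ a) (hb : 0 ≤ b) (hc : 0 ≤ c)
    (hla : l a = 1) (hlb : l b = 1) (hlc : l c = -1)
    (hab : m (a ⊓ b) < 1/4) : False := by
  set s := a - b with hs
  set t := a + c with ht
  have hls : l s = 0 := by rw [hs, map_sub, hla, hlb]; ring
  have hlt : l t = 0 := by rw [ht, map_add, hla, hlc]; ring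
  have hnb : -b ≤ c := le_trans (neg_nonpos.mpr hb) hc
  have hst : s ⊔ t = a + c := by
    rw [hs, ht, sub_eq_add_neg, ← add_sup, sup_eq_right.mpr hnb]
  have hst2 : s ⊓ t = a - b := by
    rw [hs, ht, sub_eq_add_neg, ← add_inf, inf_eq_left.mpr hnb, ← sub_eq_add_neg]
  have e1 : s ⊔ t ⊔ 0 = a + c := by
    rw [hst, sup_eq_left.mpr (add_nonneg ha hc)]
  have e2 : s ⊓ t ⊓ 0 = a ⊓ b - b := by
    rw [hst2, inf_sub]; simp
  have hw := hker s t hls hlt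
  rw [e1, e2, map_add, map_add, map_sub, hla, hlb, hlc] at hw
  have habs := abs_le.mp (hm _ (le_inf ha hb))
  linarith
end Cores2
section DStar
variable {l m : X →ₗ[ℝ] ℝ}

/-- No three "almost disjoint" positive elements on which `l` is ±1. -/
lemma dstar (hker : ∀ s t : X, l s = 0 → l t = 0 → l (s ⊔ t ⊔ 0 + s ⊓ t ⊓ 0) = 0)
    (hm : ∀ z : X, 0 ≤ z → |l z| ≤ m z) (hmpos : ∀ z : X, 0 ≤ z → 0 ≤ m z)
    (a b c : X) (ha : 0 ≤ a) (hb : 0 ≤ b) (hc : 0 ≤ c)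
    (hla : l a = 1 ∨ l a = -1) (hlb : l b = 1 ∨ l b = -1) (hlc : l c = 1 ∨ l c = -1)
    (hab : m (a ⊓ b) < 1/4) (hac : m (a ⊓ c) < 1/4) (hbc : m (b ⊓ c) < 1/4) : False := by
  have hker' : ∀ s t : X, (-l) s = 0 → (-l) t = 0 → (-l) (s ⊔ t ⊔ 0 + s ⊓ t ⊓ 0) = 0 := by
    intro s t h1 h2
    simp only [LinearMap.neg_apply, neg_eq_zero] at h1 h2 ⊢
    exact hker s t h1 h2
  have hm' : ∀ z : X, 0 ≤ z → |(-l) z| ≤ m z := by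
    intro z hz
    simpa [abs_neg] using hm z hz
  have negv : ∀ x : X, l x = -1 → (-l) x = 1 := by
    intro x h; simp [h]
  have posv : ∀ x : X, l x = 1 → (-l) x = -1 := by
    intro x h; simp [h]
  rcases hla with hla | hla <;> rcases hlb with hlb | hlb <;> rcases hlc with hlc | hlc
  · exact core1 hker hm hmpos a b c ha hb hc hla hlb hlc hab hac hbc
  · exact core2 hker hm a b c ha hb hc hla hlb hlc hab
  · exact core2 hker hm a c b ha hc hb hla hlc hlb hac
  · exact core2 hker' hm' b c a hb hc ha (negv b hlb) (negv c hlc) (posv a hla) hbc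
  · exact core2 hker hm b c a hb hc ha hlb hlc hla hbc
  · exact core2 hker' hm' a c b ha hc hb (negv a hla) (negv c hlc) (posv b hlb) hac
  · exact core2 hker' hm' a b c ha hb hc (negv a hla) (negv b hlb) (posv c hlc) hab
  · exact core1 hker' hm' hmpos a b c ha hb hc (negv a hla) (negv b hlb) (negv c hlc)
      hab hac hbc
end DStar

section PosPart
variable {l p : X →ₗ[ℝ] ℝ}

lemma l_le_p (hp : IsPosPartOf l p) {z : X} (hz : 0 ≤ z) : l z ≤ p z := by
  have := hp.2.1 z hz
  rw [LinearMap.sub_apply] at this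
  linarith

lemma abs_l_le (hp : IsPosPartOf l p) {z : X} (hz : 0 ≤ z) :
    |l z| ≤ p z + (p - l) z := by
  rw [LinearMap.sub_apply]
  have h1 := l_le_p hp hz
  have h2 := hp.1 z hz
  have h3 := hp.2.1 z hz
  rw [LinearMap.sub_apply] at h3
  rw [abs_le]; constructor <;> linarith

/-- approximate disjoint decomposition coming from `p ⊓ (p-l) = 0` -/
lemma approx_disj (hp : IsPosPartOf l p) {x : X} (hx : 0 ≤ x) {ε : ℝ} (hε : 0 < ε) :
    ∃ y : X, 0 ≤ y ∧ y ≤ x ∧ (p - l) y < ε ∧ p (x - y) < ε := by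
  have hform := hp.2.2 x hx
  set S := {r : ℝ | ∃ y : X, 0 ≤ y ∧ y ≤ x ∧ l y = r} with hS
  have hne : (0:ℝ) ∈ S := ⟨0, le_rfl, hx, map_zero l⟩
  have hbdd : ∀ r ∈ S, r ≤ p x := by
    rintro r ⟨y, hy0, hyx, rfl⟩
    exact (l_le_p hp hy0).trans (mono_of_pos hp.1 hyx)
  have hlt : p x - ε < sSup S := by rw [← hform]; linarith
  obtain ⟨r, hrS, hrlt⟩ := exists_lt_of_lt_csSup ⟨0, hne⟩ hlt
  obtain ⟨y, hy0, hyx, rfl⟩ := hrS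
  refine ⟨y, hy0, hyx, ?_, ?_⟩
  · rw [LinearMap.sub_apply]
    have : p y ≤ p x := mono_of_pos hp.1 hyx
    linarith
  · rw [map_sub]
    have : l y ≤ p y := l_le_p hp hy0
    linarith

/-- quantitative: inside every positive element there is one with large `|l|`. -/
lemma exists_big_l (hp : IsPosPartOf l p) {e : X} (he : 0 ≤ e) :
    ∃ e' : X, 0 ≤ e' ∧ e' ≤ e ∧ p e + (p - l) e ≤ 6 * |l e'| := by
  set P := p e with hP
  set Q := (p - l) e with hQ
  have hP0 : 0 ≤ P := hp.1 e he
  have hQ0 : 0 ≤ Q := hp.2.1 e he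
  have hQ' : Q = p e - l e := by rw [hQ, LinearMap.sub_apply]
  rcases le_total Q P with hQP | hPQ
  · rcases eq_or_lt_of_le hP0 with h0 | h0
    · exact ⟨0, le_rfl, he, by simp [map_zero]; linarith⟩
    · obtain ⟨y, hy0, hyx, hqy, hpxy⟩ := approx_disj hp he (by linarith : (0:ℝ) < P/6)
      have hqy' : p y - l y < P/6 := by rw [LinearMap.sub_apply] at hqy; linarith
      have hpy : P - P/6 < p y := by
        rw [map_sub] at hpxy; linarith
      have hly : P - 2*(P/6) < l y := by linarith
      refine ⟨y, hy0, hyx, ?_⟩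
      have : l y ≤ |l y| := le_abs_self _
      linarith
  · rcases eq_or_lt_of_le hQ0 with h0 | h0
    · exact ⟨0, le_rfl, he, by simp [map_zero]; linarith⟩
    · obtain ⟨y, hy0, hyx, hqy, hpxy⟩ := approx_disj hp he (by linarith : (0:ℝ) < Q/6)
      refine ⟨e - y, sub_nonneg.mpr hyx, sub_le_self e hy0, ?_⟩
      have hqey : (p - l) (e - y) = Q - (p - l) y := by
        rw [map_sub]
      have h1 : Q - Q/6 < (p - l) (e - y) := by
        rw [hqey]; linarith
      have h2 : l (e - y) = p (e - y) - (p - l) (e - y) := by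
        rw [LinearMap.sub_apply, map_sub, map_sub]; ring
      have h3 : l (e - y) < Q/6 - (Q - Q/6) := by rw [h2]; linarith
      have : -(l (e - y)) ≤ |l (e - y)| := neg_le_abs _
      linarith
end PosPart

section Band
variable {m : X →ₗ[ℝ] ℝ}

lemma inf_zero_of_nonneg {x : X} (hx : 0 ≤ x) : x ⊓ 0 = 0 := inf_eq_right.mpr hx

lemma disj_smul_nat {a b : X} (ha : 0 ≤ a) (hb : 0 ≤ b) (hab : a ⊓ b = 0) (n : ℕ) :
    a ⊓ ((n:ℝ) • b) = 0 := by
  induction n with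
  | zero => simp [inf_zero_of_nonneg ha]
  | succ k ih =>
    have hsm : ((k:ℝ) + 1) • b = (k:ℝ) • b + b := by
      rw [add_smul, one_smul]
    have hnn : (0:X) ≤ (k:ℝ) • b := smul_nonneg (by positivity) hb
    have hle : a ⊓ (((k:ℕ)+1:ℝ) • b) ≤ a ⊓ ((k:ℝ) • b) + a ⊓ b := by
      push_cast
      rw [hsm]
      exact inf_add_le' ha hnn hb
    rw [ih, hab, add_zero] at hle
    have hge : (0:X) ≤ a ⊓ (((k:ℕ)+1:ℝ) • b) :=
      le_inf ha (smul_nonneg (by positivity) hb)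
    have := le_antisymm hle hge
    push_cast at this ⊢
    exact this.symm ▸ rfl

lemma riesz_of_disj (f : X →ₗ[ℝ] ℝ) (hfpos : ∀ z : X, 0 ≤ z → 0 ≤ f z)
    (hdisj : ∀ c d : X, 0 ≤ c → 0 ≤ d → c ⊓ d = 0 → f c = 0 ∨ f d = 0) :
    IsRieszHom f := by
  intro x y
  set z := x ⊓ y with hz
  have hd0 : 0 ≤ x - z := sub_nonneg.mpr inf_le_left
  have he0 : 0 ≤ y - z := sub_nonneg.mpr inf_le_right
  have hde : (x - z) ⊓ (y - z) = 0 := by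
    rw [← inf_sub, ← hz, sub_self]
  have hsup : x ⊔ y = z + (x - z) + (y - z) := by
    have := inf_add_sup x y
    rw [← hz] at this
    have h2 : x ⊔ y = x + y - z := by
      rw [← this]; abel
    rw [h2]; abel
  have hfx : f x = f z + f (x - z) := by rw [map_sub]; ring
  have hfy : f y = f z + f (y - z) := by rw [map_sub]; ring
  have hfsup : f (x ⊔ y) = f z + f (x - z) + f (y - z) := by
    rw [hsup, map_add, map_add]
  rcases hdisj _ _ hd0 he0 hde with h | h
  · rw [hfsup, hfx, hfy, h]
    have := hfpos _ he0
    rw [sup_eq_right.mpr]; · ring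
    simp only [add_zero]
    linarith
  · rw [hfsup, hfx, hfy, h]
    have := hfpos _ hd0
    rw [sup_eq_left.mpr]; · ring
    simp only [add_zero]
    linarith

lemma band_component (hmpos : ∀ z : X, 0 ≤ z → 0 ≤ m z) (a : X) (ha : 0 ≤ a) :
    ∃ F : X →ₗ[ℝ] ℝ,
      (∀ x : X, 0 ≤ x → 0 ≤ F x) ∧
      (∀ x : X, 0 ≤ x → F x ≤ m x) ∧
      (∀ (z : X) (n : ℕ), 0 ≤ z → z ≤ (n:ℝ) • a → F z = m z) ∧
      (∀ b : X, 0 ≤ b → a ⊓ b = 0 → F b = 0) ∧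
      (∀ x : X, 0 ≤ x → ∀ ε : ℝ, 0 < ε → ∃ n : ℕ, F x - ε < m (x ⊓ ((n:ℝ) • a))) ∧
      (∀ (x : X) (n : ℕ), 0 ≤ x → m (x ⊓ ((n:ℝ) • a)) ≤ F x) := by
  set g : X → ℕ → ℝ := fun x n => m (x ⊓ ((n:ℝ) • a)) with hg
  set F₀ : X → ℝ := fun x => ⨆ n, g x n with hF₀
  have hga : ∀ n : ℕ, (0:X) ≤ (n:ℝ) • a := fun n => smul_nonneg (by positivity) ha
  have hbdd : ∀ x : X, 0 ≤ x → BddAbove (Set.range (g x)) := by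
    intro x hx
    refine ⟨m x, ?_⟩
    rintro r ⟨n, rfl⟩
    exact mono_of_pos hmpos inf_le_left
  have hub : ∀ (x : X) (n : ℕ), 0 ≤ x → g x n ≤ F₀ x := by
    intro x n hx
    exact le_ciSup (hbdd x hx) n
  have hlub : ∀ (x : X) (C : ℝ), (∀ n : ℕ, g x n ≤ C) → F₀ x ≤ C := fun x C h => ciSup_le h
  have hpos0 : ∀ x : X, 0 ≤ x → 0 ≤ F₀ x := by
    intro x hx
    have h0 : g x 0 = 0 := by
      simp only [hg, Nat.cast_zero, zero_smul, inf_zero_of_nonneg hx, map_zero]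
    have := hub x 0 hx
    linarith [this, h0.symm.le]
  have hle : ∀ x : X, 0 ≤ x → F₀ x ≤ m x := by
    intro x hx
    exact hlub x (m x) fun n => mono_of_pos hmpos inf_le_left
  have hadd : ∀ x y : X, 0 ≤ x → 0 ≤ y → F₀ (x + y) = F₀ x + F₀ y := by
    intro x y hx hy
    have hxy : (0:X) ≤ x + y := add_nonneg hx hy
    apply le_antisymm
    · apply hlub _ _
      intro n
      have h1 : (x + y) ⊓ ((n:ℝ) • a) ≤ x ⊓ ((n:ℝ) • a) + y ⊓ ((n:ℝ) • a) := by
        have := inf_add_le' (hga n) hx hy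
        calc (x + y) ⊓ ((n:ℝ) • a) = ((n:ℝ) • a) ⊓ (x + y) := inf_comm ..
        _ ≤ ((n:ℝ) • a) ⊓ x + ((n:ℝ) • a) ⊓ y := this
        _ = x ⊓ ((n:ℝ) • a) + y ⊓ ((n:ℝ) • a) := by rw [inf_comm, inf_comm ((n:ℝ) • a) y]
      have h2 : g (x+y) n ≤ g x n + g y n := by
        have := mono_of_pos hmpos h1
        rwa [map_add] at this
      have := add_le_add (hub x n hx) (hub y n hy)
      linarith
    · rw [← sub_nonneg, ← sub_sub]
      have key : ∀ n k : ℕ, g x n + g y k ≤ F₀ (x + y) := by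
        intro n k
        have hsum : x ⊓ ((n:ℝ) • a) + y ⊓ ((k:ℝ) • a) ≤ (x + y) ⊓ (((n+k:ℕ):ℝ) • a) := by
          apply le_inf
          · exact add_le_add inf_le_left inf_le_left
          · push_cast
            rw [add_smul]
            exact add_le_add inf_le_right inf_le_right
        have h3 : g x n + g y k ≤ g (x + y) (n + k) := by
          have := mono_of_pos hmpos hsum
          rwa [map_add] at this
        exact h3.trans (hub (x+y) (n+k) hxy)
      have k1 : ∀ n : ℕ, g x n ≤ F₀ (x+y) - F₀ y := by
        intro n
        rw [le_sub_iff_add_le]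
        have : ∀ k : ℕ, g y k ≤ F₀ (x+y) - g x n := by
          intro k
          have := key n k
          linarith
        have := hlub y _ this
        linarith
      have := hlub x _ k1
      linarith
  obtain ⟨F, hF⟩ := cone_extension F₀ hadd hpos0
  refine ⟨F, ?_, ?_, ?_, ?_, ?_, ?_⟩
  · intro x hx; rw [hF x hx]; exact hpos0 x hx
  · intro x hx; rw [hF x hx]; exact hle x hx
  · intro z n hz hzn
    rw [hF z hz]
    apply le_antisymm
    · exact hlub z (m z) fun k => mono_of_pos hmpos inf_le_left
    · have : g z n = m z := by
        simp only [hg]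
        rw [inf_eq_left.mpr hzn]
      rw [← this]
      exact hub z n hz
  · intro b hb hab
    rw [hF b hb]
    apply le_antisymm
    · apply hlub
      intro n
      simp only [hg]
      rw [disj_smul_nat hb ha (by rwa [inf_comm] at hab) n, map_zero]
    · exact hpos0 b hb
  · intro x hx ε hε
    have heq : (⨆ n, g x n) = F₀ x := rfl
    have hlt : F₀ x - ε < ⨆ n, g x n := by rw [heq]; linarith
    obtain ⟨n, hn⟩ := exists_lt_of_lt_ciSup hlt
    exact ⟨n, by rw [hF x hx]; exact hn⟩
  · intro x n hx
    rw [hF x hx]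
    exact hub x n hx
end Band

section Easy
variable {l p : X →ₗ[ℝ] ℝ}

lemma riesz_pos {f : X →ₗ[ℝ] ℝ} (hf : IsRieszHom f) : ∀ z : X, 0 ≤ z → 0 ≤ f z := by
  intro z hz
  have := hf z 0
  rw [sup_eq_left.mpr hz, map_zero] at this
  rw [this]
  exact le_sup_right

lemma riesz_inf {f : X →ₗ[ℝ] ℝ} (hf : IsRieszHom f) (x y : X) : f (x ⊓ y) = f x ⊓ f y := by
  have h1 := congrArg f (inf_add_sup x y)
  rw [map_add, map_add, hf x y] at h1
  have h2 : f x ⊓ f y + (f x ⊔ f y) = f x + f y := inf_add_sup _ _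
  linarith

/-- extreme ray property of real-valued Riesz homomorphisms -/
lemma extreme {f : X →ₗ[ℝ] ℝ} (hf : IsRieszHom f) (h : X →ₗ[ℝ] ℝ)
    (hpos : ∀ z : X, 0 ≤ z → 0 ≤ h z) (hle : ∀ z : X, 0 ≤ z → h z ≤ f z) :
    ∃ c : ℝ, ∀ x : X, h x = c * f x := by
  by_cases hf0 : ∀ z : X, 0 ≤ z → f z = 0
  · refine ⟨0, fun x => ?_⟩
    have hx : h x = h x⁺ - h x⁻ := by
      rw [← map_sub, posPart_sub_negPart]
    have h1 : h x⁺ = 0 := le_antisymm ((hle _ (posPart_nonneg x)).trans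
      (hf0 _ (posPart_nonneg x)).le) (hpos _ (posPart_nonneg x))
    have h2 : h x⁻ = 0 := le_antisymm ((hle _ (negPart_nonneg x)).trans
      (hf0 _ (negPart_nonneg x)).le) (hpos _ (negPart_nonneg x))
    rw [hx, h1, h2]; ring
  · push_neg at hf0
    obtain ⟨e, he, hfe⟩ := hf0
    have hfe' : 0 < f e := lt_of_le_of_ne (riesz_pos hf e he) (Ne.symm hfe)
    refine ⟨h e / f e, fun x => ?_⟩
    set z := f e • x - f x • e with hz
    have hfz : f z = 0 := by
      rw [hz, map_sub, map_smul, map_smul, smul_eq_mul, smul_eq_mul]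
      ring
    set w := z ⊔ (-z) with hw
    have hfw : f w = 0 := by
      rw [hw, hf z (-z), map_neg, hfz]
      simp
    have hw0 : (0:X) ≤ w := by
      have h1 : z ≤ w := le_sup_left
      have h2 : -z ≤ w := le_sup_right
      have : (0:X) ≤ w + w := by
        calc (0:X) = z + (-z) := by abel
        _ ≤ w + w := add_le_add h1 h2
      have h3 : w + w = (2:ℝ) • w := by
        rw [two_smul]
      rw [h3] at this
      have := smul_le_smul_of_nonneg_left this (by norm_num : (0:ℝ) ≤ 1/2)
      rwa [smul_zero, smul_smul, show (1/2 : ℝ) * 2 = 1 by norm_num, one_smul] at this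
    have hhw : h w = 0 :=
      le_antisymm ((hle w hw0).trans hfw.le) (hpos w hw0)
    have hhz : h z = 0 := by
      have h1 : h z ≤ h w := mono_of_pos hpos le_sup_left
      have h2 : h (-z) ≤ h w := mono_of_pos hpos le_sup_right
      rw [map_neg] at h2
      rw [hhw] at h1 h2
      linarith
    rw [hz, map_sub, map_smul, map_smul, smul_eq_mul, smul_eq_mul] at hhz
    field_simp
    linarith [hhz]

/-- Riesz decomposition for functionals -/
lemma decomp (P f g : X →ₗ[ℝ] ℝ) (hP : ∀ z : X, 0 ≤ z → 0 ≤ P z)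
    (hfp : ∀ z : X, 0 ≤ z → 0 ≤ f z) (hgp : ∀ z : X, 0 ≤ z → 0 ≤ g z)
    (hPle : ∀ z : X, 0 ≤ z → P z ≤ f z + g z) :
    ∃ P₁ P₂ : X →ₗ[ℝ] ℝ, (∀ x : X, P x = P₁ x + P₂ x) ∧
      (∀ z : X, 0 ≤ z → 0 ≤ P₁ z ∧ P₁ z ≤ f z) ∧
      (∀ z : X, 0 ≤ z → 0 ≤ P₂ z ∧ P₂ z ≤ g z) := by
  set T : X → Set ℝ := fun x => {r | ∃ y : X, 0 ≤ y ∧ y ≤ x ∧ r = P y + f (x - y)} with hT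
  set Q₀ : X → ℝ := fun x => sInf (T x) with hQ₀
  have hmem : ∀ x : X, 0 ≤ x → f x ∈ T x := by
    intro x hx
    exact ⟨0, le_rfl, hx, by simp⟩
  have hne : ∀ x : X, 0 ≤ x → (T x).Nonempty := fun x hx => ⟨f x, hmem x hx⟩
  have hlb : ∀ x : X, 0 ≤ x → ∀ r ∈ T x, 0 ≤ r := by
    rintro x hx r ⟨y, hy0, hyx, rfl⟩
    have h1 := hP y hy0
    have h2 := hfp (x - y) (sub_nonneg.mpr hyx)
    linarith
  have hbdd : ∀ x : X, 0 ≤ x → BddBelow (T x) := by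
    intro x hx
    exact ⟨0, fun r hr => hlb x hx r hr⟩
  have hadd : ∀ x y : X, 0 ≤ x → 0 ≤ y → Q₀ (x + y) = Q₀ x + Q₀ y := by
    intro x1 x2 h1 h2
    apply le_antisymm
    · -- Q₀(x1+x2) ≤ Q₀ x1 + Q₀ x2
      have main : ∀ r1 ∈ T x1, ∀ r2 ∈ T x2, Q₀ (x1 + x2) ≤ r1 + r2 := by
        rintro r1 ⟨y1, hy10, hy1x, rfl⟩ r2 ⟨y2, hy20, hy2x, rfl⟩
        have hw : P (y1 + y2) + f (x1 + x2 - (y1 + y2))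
            = (P y1 + f (x1 - y1)) + (P y2 + f (x2 - y2)) := by
          rw [map_add]
          have : x1 + x2 - (y1 + y2) = (x1 - y1) + (x2 - y2) := by abel
          rw [this, map_add]
          ring
        have := csInf_le (hbdd _ (add_nonneg h1 h2))
          (⟨y1 + y2, add_nonneg hy10 hy20, add_le_add hy1x hy2x, rfl⟩ :
            P (y1 + y2) + f (x1 + x2 - (y1 + y2)) ∈ T (x1 + x2))
        rw [hw] at this
        linarith
      have s1 : ∀ r1 ∈ T x1, Q₀ (x1 + x2) - r1 ≤ Q₀ x2 := by
        intro r1 h1'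
        apply le_csInf (hne x2 h2)
        intro r2 h2'
        have := main r1 h1' r2 h2'
        linarith
      have s2 : Q₀ (x1 + x2) - Q₀ x2 ≤ Q₀ x1 := by
        apply le_csInf (hne x1 h1)
        intro r1 h1'
        have := s1 r1 h1'
        linarith
      linarith
    · -- Q₀ x1 + Q₀ x2 ≤ Q₀ (x1+x2)
      apply le_csInf (hne _ (add_nonneg h1 h2))
      rintro r ⟨y, hy0, hyx, rfl⟩
      set y1 := y ⊓ x1 with hy1
      set y2 := y - y1 with hy2
      have hy10 : 0 ≤ y1 := le_inf hy0 h1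
      have hy1x : y1 ≤ x1 := inf_le_right
      have hy20 : 0 ≤ y2 := sub_nonneg.mpr inf_le_left
      have hy2x : y2 ≤ x2 := by
        rw [hy2, sub_le_iff_le_add, hy1]
        have k1 : y - x2 ≤ y := sub_le_self y h2
        have k2 : y - x2 ≤ x1 := by
          rw [sub_le_iff_le_add]
          exact hyx
        calc y = y - x2 + x2 := by abel
        _ ≤ y ⊓ x1 + x2 := add_le_add (le_inf k1 k2) le_rfl
        _ = x2 + y ⊓ x1 := add_comm _ _
      have hyy : y = y1 + y2 := by rw [hy2]; abel
      have e1 : P y = P y1 + P y2 := by rw [hyy, map_add]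
      have e2 : f (x1 + x2 - y) = f (x1 - y1) + f (x2 - y2) := by
        rw [← map_add]
        congr 1
        rw [hyy]
        abel
      have i1 : Q₀ x1 ≤ P y1 + f (x1 - y1) :=
        csInf_le (hbdd x1 h1) ⟨y1, hy10, hy1x, rfl⟩
      have i2 : Q₀ x2 ≤ P y2 + f (x2 - y2) :=
        csInf_le (hbdd x2 h2) ⟨y2, hy20, hy2x, rfl⟩
      linarith [e1, e2, i1, i2]
  have hposQ : ∀ x : X, 0 ≤ x → 0 ≤ Q₀ x :=
    fun x hx => le_csInf (hne x hx) (hlb x hx)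
  obtain ⟨P₁, hP₁⟩ := cone_extension Q₀ hadd hposQ
  refine ⟨P₁, P - P₁, fun x => by rw [LinearMap.sub_apply]; ring, ?_, ?_⟩
  · intro z hz
    constructor
    · rw [hP₁ z hz]; exact hposQ z hz
    · rw [hP₁ z hz]
      exact csInf_le (hbdd z hz) (hmem z hz)
  · intro z hz
    constructor
    · rw [LinearMap.sub_apply, hP₁ z hz, sub_nonneg]
      exact csInf_le (hbdd z hz) ⟨z, hz, le_rfl, by simp⟩
    · rw [LinearMap.sub_apply, hP₁ z hz, sub_le_iff_le_add, add_comm, ← sub_le_iff_le_add]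
      apply le_csInf (hne z hz)
      rintro r ⟨y, hy0, hyz, rfl⟩
      have k1 : P (z - y) ≤ f (z - y) + g (z - y) := hPle _ (sub_nonneg.mpr hyz)
      have k2 : g (z - y) ≤ g z := mono_of_pos hgp (sub_le_self z hy0)
      simp only [map_sub] at k1 k2 ⊢
      linarith
end Easy

section Phi

noncomputable def phi (a b : ℝ) : ℝ := a ⊔ b ⊔ 0 + a ⊓ b ⊓ 0

lemma phi_neg (a b : ℝ) : phi (-a) (-b) = - phi a b := by
  unfold phi
  rw [show (0:ℝ) = -0 by ring, ← neg_inf, ← neg_inf, ← neg_sup, ← neg_sup]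
  ring

lemma phi_smul_nonneg {s : ℝ} (hs : 0 ≤ s) (a b : ℝ) : phi (s*a) (s*b) = s * phi a b := by
  have e1 : s * (a ⊔ b ⊔ 0) = (s*a) ⊔ (s*b) ⊔ 0 := by
    rw [← smul_eq_mul, smul_sup' hs (a ⊔ b) 0, smul_sup' hs a b, smul_zero]
    simp [smul_eq_mul]
  have e2 : s * (a ⊓ b ⊓ 0) = (s*a) ⊓ (s*b) ⊓ 0 := by
    rw [← smul_eq_mul, smul_inf' hs (a ⊓ b) 0, smul_inf' hs a b, smul_zero]
    simp [smul_eq_mul]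
  unfold phi
  rw [← e1, ← e2]
  ring

lemma phi_smul (s a b : ℝ) : phi (s*a) (s*b) = s * phi a b := by
  rcases le_total 0 s with hs | hs
  · exact phi_smul_nonneg hs a b
  · have h1 : s * a = -((-s) * a) := by ring
    have h2 : s * b = -((-s) * b) := by ring
    rw [h1, h2, phi_neg, phi_smul_nonneg (by linarith : (0:ℝ) ≤ -s)]
    ring

lemma phi_key {α β a b c d : ℝ} (h1 : α*a + β*c = 0) (h2 : α*b + β*d = 0) :
    α * phi a b + β * phi c d = 0 := by
  rcases eq_or_ne β 0 with hβ | hβ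
  · subst hβ
    rcases eq_or_ne α 0 with hα | hα
    · subst hα; ring
    · have ha : a = 0 := by
        have : α * a = 0 := by linarith
        exact (mul_eq_zero.mp this).resolve_left hα
      have hb : b = 0 := by
        have : α * b = 0 := by linarith
        exact (mul_eq_zero.mp this).resolve_left hα
      subst ha; subst hb
      unfold phi
      norm_num
  · have hc : c = (-α/β) * a := by field_simp; linarith
    have hd : d = (-α/β) * b := by field_simp; linarith
    rw [hc, hd, phi_smul]
    field_simp
    ring
end Phi

section Helpers

lemma smul_le_max_smul {r1 r2 : ℝ} (h1 : 0 ≤ r1) (h2 : 0 ≤ r2) {u : X} (hu : 0 ≤ u) :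
    r1 • u ≤ (r1 ⊔ r2) • u := by
  have : (r1 ⊔ r2 - r1) • u ≥ 0 := smul_nonneg (by simp) hu
  calc r1 • u = r1 • u + 0 := by abel
  _ ≤ r1 • u + (r1 ⊔ r2 - r1) • u := by exact add_le_add le_rfl this
  _ = (r1 ⊔ r2) • u := by rw [← add_smul]; congr 1; ring

lemma scaled_inf_le {r1 r2 : ℝ} (h1 : 0 ≤ r1) (h2 : 0 ≤ r2) {u v : X}
    (hu : 0 ≤ u) (hv : 0 ≤ v) :
    (r1 • u) ⊓ (r2 • v) ≤ (r1 ⊔ r2) • (u ⊓ v) := by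
  rw [smul_inf' (le_trans h1 le_sup_left)]
  exact inf_le_inf (smul_le_max_smul h1 h2 hu)
    (by rw [sup_comm]; exact smul_le_max_smul h2 h1 hv)

lemma scaled_disj {r1 r2 : ℝ} (h1 : 0 ≤ r1) (h2 : 0 ≤ r2) {u v : X}
    (hu : 0 ≤ u) (hv : 0 ≤ v) (huv : u ⊓ v = 0) : (r1 • u) ⊓ (r2 • v) = 0 := by
  apply le_antisymm
  · have := scaled_inf_le h1 h2 hu hv (X := X)
    rwa [huv, smul_zero] at this
  · exact le_inf (smul_nonneg h1 hu) (smul_nonneg h2 hv)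

end Helpers

section MPR
variable {l p : X →ₗ[ℝ] ℝ}

lemma mpr_dir (hp : IsPosPartOf l p) {f g : X →ₗ[ℝ] ℝ}
    (hf : IsRieszHom f) (hg : IsRieszHom g) (heq : p + (p - l) = f + g) :
    IsGrothendieckSubspace (LinearMap.ker l) := by
  have hfp := riesz_pos hf
  have hgp := riesz_pos hg
  have happ : ∀ z : X, p z + (p - l) z = f z + g z := by
    intro z
    rw [← LinearMap.add_apply, heq, LinearMap.add_apply]
  have hple : ∀ z : X, 0 ≤ z → p z ≤ f z + g z := by
    intro z hz
    have := hp.2.1 z hz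
    have h2 := happ z
    linarith
  have hqle : ∀ z : X, 0 ≤ z → (p - l) z ≤ f z + g z := by
    intro z hz
    have := hp.1 z hz
    have h2 := happ z
    linarith
  obtain ⟨P₁, P₂, hPsplit, hP1, hP2⟩ := decomp p f g hp.1 hfp hgp hple
  obtain ⟨c1, hc1⟩ := extreme hf P₁ (fun z hz => (hP1 z hz).1) (fun z hz => (hP1 z hz).2)
  obtain ⟨c2, hc2⟩ := extreme hg P₂ (fun z hz => (hP2 z hz).1) (fun z hz => (hP2 z hz).2)
  obtain ⟨Q₁, Q₂, hQsplit, hQ1, hQ2⟩ := decomp (p - l) f g hp.2.1 hfp hgp hqle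
  obtain ⟨c3, hc3⟩ := extreme hf Q₁ (fun z hz => (hQ1 z hz).1) (fun z hz => (hQ1 z hz).2)
  obtain ⟨c4, hc4⟩ := extreme hg Q₂ (fun z hz => (hQ2 z hz).1) (fun z hz => (hQ2 z hz).2)
  have hl : ∀ x : X, l x = (c1 - c3) * f x + (c2 - c4) * g x := by
    intro x
    have h1 : l x = p x - (p - l) x := by rw [LinearMap.sub_apply]; ring
    rw [h1, hPsplit x, hQsplit x, hc1, hc2, hc3, hc4]
    ring
  intro x hx y hy
  rw [LinearMap.mem_ker] at hx hy ⊢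
  have hfw : f (x ⊔ y ⊔ 0 + x ⊓ y ⊓ 0) = phi (f x) (f y) := by
    unfold phi
    rw [map_add, hf (x ⊔ y) 0, hf x y, riesz_inf hf (x ⊓ y) 0, riesz_inf hf x y, map_zero]
  have hgw : g (x ⊔ y ⊔ 0 + x ⊓ y ⊓ 0) = phi (g x) (g y) := by
    unfold phi
    rw [map_add, hg (x ⊔ y) 0, hg x y, riesz_inf hg (x ⊓ y) 0, riesz_inf hg x y, map_zero]
  have h1 : (c1 - c3) * f x + (c2 - c4) * g x = 0 := by rw [← hl x]; exact hx
  have h2 : (c1 - c3) * f y + (c2 - c4) * g y = 0 := by rw [← hl y]; exact hy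
  rw [hl (x ⊔ y ⊔ 0 + x ⊓ y ⊓ 0), hfw, hgw]
  exact phi_key h1 h2
end MPR

section MP
variable {l p : X →ₗ[ℝ] ℝ}

lemma mp_dir (hp : IsPosPartOf l p) (hG : IsGrothendieckSubspace (LinearMap.ker l)) :
    ∃ f g : X →ₗ[ℝ] ℝ, IsRieszHom f ∧ IsRieszHom g ∧ p + (p - l) = f + g := by
  set m : X →ₗ[ℝ] ℝ := p + (p - l) with hm
  have hmapp : ∀ z : X, m z = p z + (p - l) z := by
    intro z; rw [hm, LinearMap.add_apply]
  have hmpos : ∀ z : X, 0 ≤ z → 0 ≤ m z := by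
    intro z hz
    rw [hmapp]
    have h1 := hp.1 z hz
    have h2 := hp.2.1 z hz
    linarith
  have hmabs : ∀ z : X, 0 ≤ z → |l z| ≤ m z := by
    intro z hz
    rw [hmapp]
    exact abs_l_le hp hz
  have hker : ∀ s t : X, l s = 0 → l t = 0 → l (s ⊔ t ⊔ 0 + s ⊓ t ⊓ 0) = 0 := by
    intro s t h1 h2
    exact LinearMap.mem_ker.mp
      (hG s (LinearMap.mem_ker.mpr h1) t (LinearMap.mem_ker.mpr h2))
  have hbig : ∀ e : X, 0 ≤ e → ∃ e' : X, 0 ≤ e' ∧ e' ≤ e ∧ m e ≤ 6 * |l e'| := by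
    intro e he
    obtain ⟨e', h0, h1, h2⟩ := exists_big_l hp he
    exact ⟨e', h0, h1, by rw [hmapp]; exact h2⟩
  have unit : ∀ e : X, 0 ≤ e → 0 < m e → ∃ (e₀ : X) (r : ℝ), 0 ≤ e₀ ∧ e₀ ≤ e ∧
      0 < r ∧ r ≤ 6 / m e ∧ (l (r • e₀) = 1 ∨ l (r • e₀) = -1) := by
    intro e he hme
    obtain ⟨e₀, h0, h1, h2⟩ := hbig e he
    have habs : 0 < |l e₀| := by linarith
    refine ⟨e₀, |l e₀|⁻¹, h0, h1, inv_pos.mpr habs, ?_, ?_⟩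
    · have k1 : m e / 6 ≤ |l e₀| := by linarith
      have k2 : |l e₀|⁻¹ ≤ (m e / 6)⁻¹ :=
        inv_anti₀ (by linarith) k1
      calc |l e₀|⁻¹ ≤ (m e / 6)⁻¹ := k2
      _ = 6 / m e := by rw [inv_div]
    · rw [map_smul, smul_eq_mul]
      rcases abs_cases (l e₀) with ⟨hh, _⟩ | ⟨hh, _⟩
      · left; rw [← hh]; field_simp; exact (abs_abs _).symm
      · right
        rw [show l e₀ = -|l e₀| by linarith]
        field_simp
        rw [abs_neg, abs_abs, div_self habs.ne']
  by_cases hdall : ∀ c d : X, 0 ≤ c → 0 ≤ d → c ⊓ d = 0 → m c = 0 ∨ m d = 0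
  · refine ⟨m, 0, riesz_of_disj m hmpos hdall, ?_, ?_⟩
    · intro x y; simp
    · exact (add_zero m).symm
  · push_neg at hdall
    obtain ⟨a, b, ha, hb, hab, hma, hmb⟩ := hdall
    have hma' : 0 < m a := lt_of_le_of_ne (hmpos a ha) (Ne.symm hma)
    have hmb' : 0 < m b := lt_of_le_of_ne (hmpos b hb) (Ne.symm hmb)
    obtain ⟨F, Fpos, Fle, Feq, Fdisj0, Fapprox, Flb⟩ := band_component hmpos a ha
    set G : X →ₗ[ℝ] ℝ := m - F with hGdef
    have Gapp : ∀ z : X, G z = m z - F z := by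
      intro z; rw [hGdef, LinearMap.sub_apply]
    have Gpos : ∀ z : X, 0 ≤ z → 0 ≤ G z := by
      intro z hz; rw [Gapp]; linarith [Fle z hz]
    -- F preserves disjointness
    have hFdisj : ∀ c d : X, 0 ≤ c → 0 ≤ d → c ⊓ d = 0 → F c = 0 ∨ F d = 0 := by
      intro c d hc hd hcd
      by_contra hcon
      push_neg at hcon
      have hFc : 0 < F c := lt_of_le_of_ne (Fpos c hc) (Ne.symm hcon.1)
      have hFd : 0 < F d := lt_of_le_of_ne (Fpos d hd) (Ne.symm hcon.2)
      obtain ⟨n1, hn1⟩ := Fapprox c hc (F c) hFc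
      obtain ⟨n2, hn2⟩ := Fapprox d hd (F d) hFd
      set c' := c ⊓ ((n1:ℝ) • a) with hc'def
      set d' := d ⊓ ((n2:ℝ) • a) with hd'def
      have hc'0 : 0 ≤ c' := le_inf hc (smul_nonneg (by positivity) ha)
      have hd'0 : 0 ≤ d' := le_inf hd (smul_nonneg (by positivity) ha)
      have hmc' : 0 < m c' := by linarith
      have hmd' : 0 < m d' := by linarith
      have hbc' : b ⊓ c' = 0 := by
        apply le_antisymm
        · calc b ⊓ c' ≤ b ⊓ ((n1:ℝ) • a) := inf_le_inf_left b inf_le_right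
          _ = 0 := disj_smul_nat hb ha (by rwa [inf_comm] at hab) n1
        · exact le_inf hb hc'0
      have hbd' : b ⊓ d' = 0 := by
        apply le_antisymm
        · calc b ⊓ d' ≤ b ⊓ ((n2:ℝ) • a) := inf_le_inf_left b inf_le_right
          _ = 0 := disj_smul_nat hb ha (by rwa [inf_comm] at hab) n2
        · exact le_inf hb hd'0
      have hc'd' : c' ⊓ d' = 0 := by
        apply le_antisymm
        · calc c' ⊓ d' ≤ c ⊓ d := inf_le_inf inf_le_left inf_le_left
          _ = 0 := hcd
        · exact le_inf hc'0 hd'0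
      obtain ⟨b₀, rb, hb₀0, hb₀le, hrb0, _, hlb0⟩ := unit b hb hmb'
      obtain ⟨c₀, rc, hc₀0, hc₀le, hrc0, _, hlc0⟩ := unit c' hc'0 hmc'
      obtain ⟨d₀, rd, hd₀0, hd₀le, hrd0, _, hld0⟩ := unit d' hd'0 hmd'
      have db : ∀ (u v : X) (hu : 0 ≤ u) (hv : 0 ≤ v) (r1 r2 : ℝ), 0 ≤ r1 → 0 ≤ r2 →
          u ⊓ v = 0 → m ((r1 • u) ⊓ (r2 • v)) < 1/4 := by
        intro u v hu hv r1 r2 h1 h2 huv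
        rw [scaled_disj h1 h2 hu hv huv, map_zero]
        norm_num
      have dbc : b₀ ⊓ c₀ = 0 := le_antisymm
        ((inf_le_inf hb₀le hc₀le).trans_eq hbc') (le_inf hb₀0 hc₀0)
      have dbd : b₀ ⊓ d₀ = 0 := le_antisymm
        ((inf_le_inf hb₀le hd₀le).trans_eq hbd') (le_inf hb₀0 hd₀0)
      have dcd : c₀ ⊓ d₀ = 0 := le_antisymm
        ((inf_le_inf hc₀le hd₀le).trans_eq hc'd') (le_inf hc₀0 hd₀0)
      exact dstar hker hmabs hmpos (rb • b₀) (rc • c₀) (rd • d₀)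
        (smul_nonneg hrb0.le hb₀0) (smul_nonneg hrc0.le hc₀0) (smul_nonneg hrd0.le hd₀0)
        hlb0 hlc0 hld0
        (db b₀ c₀ hb₀0 hc₀0 rb rc hrb0.le hrc0.le dbc)
        (db b₀ d₀ hb₀0 hd₀0 rb rd hrb0.le hrd0.le dbd)
        (db c₀ d₀ hc₀0 hd₀0 rc rd hrc0.le hrd0.le dcd)
    -- G preserves disjointness
    have hGdisj : ∀ c d : X, 0 ≤ c → 0 ≤ d → c ⊓ d = 0 → G c = 0 ∨ G d = 0 := by
      intro c d hc hd hcd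
      by_contra hcon
      push_neg at hcon
      have hGc : 0 < G c := lt_of_le_of_ne (Gpos c hc) (Ne.symm hcon.1)
      have hGd : 0 < G d := lt_of_le_of_ne (Gpos d hd) (Ne.symm hcon.2)
      obtain ⟨a₀, ra, ha₀0, ha₀le, hra0, hraB, hla0⟩ := unit a ha hma'
      set S : ℝ := (6 / m a) ⊔ ((6 / G c) ⊔ (6 / G d)) with hSdef
      have hS0 : 0 < S := lt_of_lt_of_le (by positivity) (le_sup_left : 6 / m a ≤ S)
      set ε : ℝ := (1/8) / S with hεdef
      have hε0 : 0 < ε := by positivity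
      obtain ⟨n1, hn1⟩ := Fapprox c hc ε hε0
      obtain ⟨n2, hn2⟩ := Fapprox d hd ε hε0
      set c1 := c - c ⊓ ((n1:ℝ) • a) with hc1def
      set d1 := d - d ⊓ ((n2:ℝ) • a) with hd1def
      have hc10 : 0 ≤ c1 := sub_nonneg.mpr inf_le_left
      have hd10 : 0 ≤ d1 := sub_nonneg.mpr inf_le_left
      have hc1c : c1 ≤ c := sub_le_self c (le_inf hc (smul_nonneg (by positivity) ha))
      have hd1d : d1 ≤ d := sub_le_self d (le_inf hd (smul_nonneg (by positivity) ha))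
      have hinfc0 : (0:X) ≤ c ⊓ ((n1:ℝ) • a) := le_inf hc (smul_nonneg (by positivity) ha)
      have hinfd0 : (0:X) ≤ d ⊓ ((n2:ℝ) • a) := le_inf hd (smul_nonneg (by positivity) ha)
      have hmc1 : G c ≤ m c1 := by
        have h1 : m c1 = m c - m (c ⊓ ((n1:ℝ) • a)) := by rw [hc1def, map_sub]
        have h2 : m (c ⊓ ((n1:ℝ) • a)) ≤ F c := Flb c n1 hc
        rw [Gapp]
        linarith
      have hmd1 : G d ≤ m d1 := by
        have h1 : m d1 = m d - m (d ⊓ ((n2:ℝ) • a)) := by rw [hd1def, map_sub]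
        have h2 : m (d ⊓ ((n2:ℝ) • a)) ≤ F d := Flb d n2 hd
        rw [Gapp]
        linarith
      have hmc1' : 0 < m c1 := lt_of_lt_of_le hGc hmc1
      have hmd1' : 0 < m d1 := lt_of_lt_of_le hGd hmd1
      have hover_c : m (c1 ⊓ a) < ε := by
        have h1 : m (c1 ⊓ a) ≤ F c1 := by
          have := Flb c1 1 hc10
          rwa [Nat.cast_one, one_smul] at this
        have h2 : F c1 = F c - F (c ⊓ ((n1:ℝ) • a)) := by rw [hc1def, map_sub]
        have h3 : F (c ⊓ ((n1:ℝ) • a)) = m (c ⊓ ((n1:ℝ) • a)) :=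
          Feq _ n1 hinfc0 inf_le_right
        linarith
      have hover_d : m (d1 ⊓ a) < ε := by
        have h1 : m (d1 ⊓ a) ≤ F d1 := by
          have := Flb d1 1 hd10
          rwa [Nat.cast_one, one_smul] at this
        have h2 : F d1 = F d - F (d ⊓ ((n2:ℝ) • a)) := by rw [hd1def, map_sub]
        have h3 : F (d ⊓ ((n2:ℝ) • a)) = m (d ⊓ ((n2:ℝ) • a)) :=
          Feq _ n2 hinfd0 inf_le_right
        linarith
      obtain ⟨c₀, rc, hc₀0, hc₀le, hrc0, hrcB, hlc0⟩ := unit c1 hc10 hmc1'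
      obtain ⟨d₀, rd, hd₀0, hd₀le, hrd0, hrdB, hld0⟩ := unit d1 hd10 hmd1'
      -- scale bounds
      have hraS : ra ≤ S := hraB.trans le_sup_left
      have hrcS : rc ≤ S := by
        have h1 : 6 / m c1 ≤ 6 / G c := by
          apply div_le_div_of_nonneg_left (by norm_num) hGc hmc1
        exact hrcB.trans (h1.trans ((le_sup_left.trans le_sup_right) : 6 / G c ≤ S))
      have hrdS : rd ≤ S := by
        have h1 : 6 / m d1 ≤ 6 / G d := by
          apply div_le_div_of_nonneg_left (by norm_num) hGd hmd1
        exact hrdB.trans (h1.trans ((le_sup_right.trans le_sup_right) : 6 / G d ≤ S))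
      -- overlap bounds
      have overlap : ∀ (u v : X), 0 ≤ u → 0 ≤ v → ∀ r1 r2 : ℝ, 0 < r1 → 0 < r2 →
          r1 ≤ S → r2 ≤ S → m (u ⊓ v) < ε → m ((r1 • u) ⊓ (r2 • v)) < 1/4 := by
        intro u v hu hv r1 r2 h1 h2 h1S h2S hov
        have k1 : (r1 • u) ⊓ (r2 • v) ≤ (r1 ⊔ r2) • (u ⊓ v) :=
          scaled_inf_le h1.le h2.le hu hv
        have k2 : m ((r1 • u) ⊓ (r2 • v)) ≤ (r1 ⊔ r2) * m (u ⊓ v) := by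
          have := mono_of_pos hmpos k1
          rwa [map_smul, smul_eq_mul] at this
        have k3 : 0 ≤ m (u ⊓ v) := hmpos _ (le_inf hu hv)
        have k4 : r1 ⊔ r2 ≤ S := sup_le h1S h2S
        have k5 : (0:ℝ) < r1 ⊔ r2 := lt_of_lt_of_le h1 le_sup_left
        have k6 : (r1 ⊔ r2) * m (u ⊓ v) ≤ S * ε :=
          mul_le_mul k4 hov.le k3 hS0.le
        have k7 : S * ε = 1/8 := by
          rw [hεdef]
          field_simp
        linarith
      have hac : m (a₀ ⊓ c₀) < ε := by
        have h1 : a₀ ⊓ c₀ ≤ c1 ⊓ a := by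
          rw [inf_comm]
          exact inf_le_inf hc₀le ha₀le
        exact lt_of_le_of_lt (mono_of_pos hmpos h1) hover_c
      have had : m (a₀ ⊓ d₀) < ε := by
        have h1 : a₀ ⊓ d₀ ≤ d1 ⊓ a := by
          rw [inf_comm]
          exact inf_le_inf hd₀le ha₀le
        exact lt_of_le_of_lt (mono_of_pos hmpos h1) hover_d
      have hcd0 : c₀ ⊓ d₀ = 0 := by
        apply le_antisymm
        · calc c₀ ⊓ d₀ ≤ c1 ⊓ d1 := inf_le_inf hc₀le hd₀le
          _ ≤ c ⊓ d := inf_le_inf hc1c hd1d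
          _ = 0 := hcd
        · exact le_inf hc₀0 hd₀0
      have bndcd : m ((rc • c₀) ⊓ (rd • d₀)) < 1/4 := by
        rw [scaled_disj hrc0.le hrd0.le hc₀0 hd₀0 hcd0, map_zero]
        norm_num
      exact dstar hker hmabs hmpos (ra • a₀) (rc • c₀) (rd • d₀)
        (smul_nonneg hra0.le ha₀0) (smul_nonneg hrc0.le hc₀0) (smul_nonneg hrd0.le hd₀0)
        hla0 hlc0 hld0
        (overlap a₀ c₀ ha₀0 hc₀0 ra rc hra0 hrc0 hraS hrcS hac)
        (overlap a₀ d₀ ha₀0 hd₀0 ra rd hra0 hrd0 hraS hrdS had)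
        bndcd
    refine ⟨F, G, riesz_of_disj F Fpos hFdisj, riesz_of_disj G Gpos hGdisj, ?_⟩
    rw [hGdef]
    abel
end MP

theorem ker_grothendieck_iff_modulus_sum_riesz_homs (l p : X →ₗ[ℝ] ℝ)
    (hp : IsPosPartOf l p) :
    IsGrothendieckSubspace (LinearMap.ker l) ↔
      ∃ f g : X →ₗ[ℝ] ℝ, IsRieszHom f ∧ IsRieszHom g ∧ p + (p - l) = f + g := by
  constructor
  · exact fun hG => mp_dir hp hG
  · rintro ⟨f, g, hf, hg, heq⟩
    exact mpr_dir hp hf hg heq
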